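/- If {S_1,...,S_k} is an MSR subspace family of m-spaces in F_q^{2m} witnessed by matrices g_1,...,g_k, then the tensor/block construction yields an MSR subspace family of 2m-spaces in F_q^{4m} of size k+3: namely S'_i = S_i ⊕ S_i^h (where h maps e_i to e_{i+2m}) with witness diag(g_i, g_i) for i ≤ k, together with S'_{k+1} = ⟨e_1,...,e_{2m}⟩, S'_{k+2} = ⟨e_{2m+1},...,e_{4m}⟩, S'_{k+3} = ⟨e_1+e_{2m+1},...,e_{2m}+e_{4m}⟩ with the block-matrix witnesses [[I,0],[αI,(1-α)I]], [[(1-α^{-1})I, α^{-1}I],[0,I]], [[I,0],[0,αI]] for any α ∈ F_q \ {0,1}, q ≥ 3. -/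

import Mathlib

open Submodule Module

/-- MSR subspace family. -/
def IsMSRFamily {F V : Type*} [Field F] [AddCommGroup V] [Module F V]
    (m : ℕ) (𝒮 : Set (Submodule F V)) : Prop :=
  (∀ S ∈ 𝒮, finrank F S = m) ∧
  ∀ S ∈ 𝒮, ∃ g : V ≃ₗ[F] V,
    S.map (g : V →ₗ[F] V) ⊓ S = ⊥ ∧
    ∀ T ∈ 𝒮, T ≠ S → T.map (g : V →ₗ[F] V) = T

section Aux

lemma auxMapEqSelf {F V : Type*} [Field F] [AddCommGroup V] [Module F V]
    {e : V ≃ₗ[F] V} {T : Submodule F V}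
    (h1 : ∀ v ∈ T, e v ∈ T) (h2 : ∀ v ∈ T, e.symm v ∈ T) :
    T.map (e : V →ₗ[F] V) = T := by
  apply le_antisymm
  · rintro _ ⟨v, hv, rfl⟩; exact h1 v hv
  · intro v hv
    exact ⟨e.symm v, h2 v hv, e.apply_symm_apply v⟩

lemma auxFinrankProd {F V₁ V₂ : Type*} [Field F] [AddCommGroup V₁] [Module F V₁]
    [AddCommGroup V₂] [Module F V₂] [FiniteDimensional F V₁] [FiniteDimensional F V₂]
    (p : Submodule F V₁) (q : Submodule F V₂) :
    finrank F (p.prod q) = finrank F p + finrank F q := by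
  have e : (p.prod q) ≃ₗ[F] p × q :=
    { toFun := fun x => (⟨x.1.1, x.2.1⟩, ⟨x.1.2, x.2.2⟩)
      invFun := fun y => ⟨(y.1.1, y.2.1), y.1.2, y.2.2⟩
      map_add' := fun _ _ => rfl
      map_smul' := fun _ _ => rfl
      left_inv := fun _ => rfl
      right_inv := fun _ => rfl }
  rw [e.finrank_eq, Module.finrank_prod]

lemma auxMapProdMap {F V₁ V₂ : Type*} [Field F] [AddCommGroup V₁] [Module F V₁]
    [AddCommGroup V₂] [Module F V₂] (f : V₁ →ₗ[F] V₁) (g : V₂ →ₗ[F] V₂)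
    (p : Submodule F V₁) (q : Submodule F V₂) :
    (p.prod q).map (f.prodMap g) = (p.map f).prod (q.map g) := by
  ext ⟨a, b⟩
  simp only [Submodule.mem_map, Submodule.mem_prod]
  constructor
  · rintro ⟨⟨x, y⟩, ⟨hx, hy⟩, h⟩
    simp only [LinearMap.prodMap_apply, Prod.mk.injEq] at h
    exact ⟨⟨x, hx, h.1⟩, ⟨y, hy, h.2⟩⟩
  · rintro ⟨⟨x, hx, ha⟩, ⟨y, hy, hb⟩⟩
    exact ⟨(x, y), ⟨hx, hy⟩, by simp [LinearMap.prodMap_apply, ha, hb]⟩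

/-- Triangular equivalence `(x, y) ↦ (x, a•x + b•y)` for `b ≠ 0`. -/
def auxTL {F W : Type*} [Field F] [AddCommGroup W] [Module F W] (a b : F) (hb : b ≠ 0) :
    (W × W) ≃ₗ[F] (W × W) where
  toFun v := (v.1, a • v.1 + b • v.2)
  invFun v := (v.1, b⁻¹ • (v.2 - a • v.1))
  map_add' v w := by ext <;> simp <;> module
  map_smul' c v := by ext <;> simp <;> module
  left_inv v := by
    ext
    · rfl
    · simp [add_sub_cancel_left, smul_smul, inv_mul_cancel₀ hb]
  right_inv v := by
    ext
    · rfl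
    · show a • v.1 + b • b⁻¹ • (v.2 - a • v.1) = v.2
      rw [smul_smul, mul_inv_cancel₀ hb, one_smul]; abel

@[simp] lemma auxTL_apply {F W : Type*} [Field F] [AddCommGroup W] [Module F W]
    (a b : F) (hb : b ≠ 0) (v : W × W) :
    auxTL a b hb v = (v.1, a • v.1 + b • v.2) := rfl

/-- Triangular equivalence `(x, y) ↦ (a•y + b•x, y)` for `b ≠ 0`. -/
def auxTR {F W : Type*} [Field F] [AddCommGroup W] [Module F W] (a b : F) (hb : b ≠ 0) :
    (W × W) ≃ₗ[F] (W × W) where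
  toFun v := (a • v.2 + b • v.1, v.2)
  invFun v := (b⁻¹ • (v.1 - a • v.2), v.2)
  map_add' v w := by ext <;> simp <;> module
  map_smul' c v := by ext <;> simp <;> module
  left_inv v := by
    ext
    · simp [add_sub_cancel_left, smul_smul, inv_mul_cancel₀ hb]
    · rfl
  right_inv v := by
    ext
    · show a • v.2 + b • b⁻¹ • (v.1 - a • v.2) = v.1
      rw [smul_smul, mul_inv_cancel₀ hb, one_smul]; abel
    · rfl

@[simp] lemma auxTR_apply {F W : Type*} [Field F] [AddCommGroup W] [Module F W]
    (a b : F) (hb : b ≠ 0) (v : W × W) :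
    auxTR a b hb v = (a • v.2 + b • v.1, v.2) := rfl

@[simp] lemma auxTR_symm_apply {F W : Type*} [Field F] [AddCommGroup W] [Module F W]
    (a b : F) (hb : b ≠ 0) (v : W × W) :
    (auxTR a b hb).symm v = (b⁻¹ • (v.1 - a • v.2), v.2) := rfl

@[simp] lemma auxTL_symm_apply {F W : Type*} [Field F] [AddCommGroup W] [Module F W]
    (a b : F) (hb : b ≠ 0) (v : W × W) :
    (auxTL a b hb).symm v = (v.1, b⁻¹ • (v.2 - a • v.1)) := rfl

end Aux

/-- The recursive (tensor/block) construction: if `S₁, …, S_k` is an MSR subspace family of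
`m`-spaces of `W = F_q^{2m}` witnessed by invertible maps `g₁, …, g_k`, then, identifying
`F_q^{4m}` with `W × W` (the map `h : eᵢ ↦ e_{i+2m}` being the swap of the two factors, so
that `Sᵢ + Sᵢ^h = Sᵢ × Sᵢ`), the family consisting of the subspaces `Sᵢ × Sᵢ` (with
witnesses `diag(gᵢ,gᵢ)`) together with `W × 0 = ⟨e₁,…,e_{2m}⟩`, `0 × W = ⟨e_{2m+1},…,e_{4m}⟩`
and the diagonal `⟨e₁+e_{2m+1},…,e_{2m}+e_{4m}⟩` (with the block-matrix witnesses
`[[I,0],[αI,(1-α)I]]`, `[[(1-α⁻¹)I,α⁻¹I],[0,I]]`, `[[I,0],[0,αI]]` for `α ∈ F_q \ {0,1}`,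
`q ≥ 3`) is an MSR subspace family of `2m`-spaces of `F_q^{4m}` of size `k + 3`. -/

theorem stmt8 (F : Type*) [Field F] [Fintype F] (hq : 3 ≤ Fintype.card F)
    (m k : ℕ) (hm : 1 ≤ m)
    (S : Fin k → Submodule F (Fin (2 * m) → F)) (hinj : Function.Injective S)
    (hdim : ∀ i, finrank F (S i) = m)
    (g : Fin k → ((Fin (2 * m) → F) ≃ₗ[F] (Fin (2 * m) → F)))
    (hwit : ∀ i, (S i).map ((g i) : (Fin (2 * m) → F) →ₗ[F] (Fin (2 * m) → F)) ⊓ S i = ⊥ ∧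
      ∀ j, j ≠ i → (S j).map ((g i) : (Fin (2 * m) → F) →ₗ[F] (Fin (2 * m) → F)) = S j) :
    let W := Fin (2 * m) → F
    let 𝒮' : Set (Submodule F (W × W)) :=
      (Set.range fun i => (S i).prod (S i)) ∪
        {Submodule.prod (⊤ : Submodule F W) (⊥ : Submodule F W),
         Submodule.prod (⊥ : Submodule F W) (⊤ : Submodule F W),
         LinearMap.range ((LinearMap.id : W →ₗ[F] W).prod (LinearMap.id : W →ₗ[F] W))}
    IsMSRFamily (2 * m) 𝒮' ∧ 𝒮'.ncard = k + 3 := by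
  intro W 𝒮'
  classical
  -- basic setup
  haveI : Nonempty (Fin (2 * m)) := ⟨⟨0, by omega⟩⟩
  haveI : Nontrivial W := Function.nontrivial
  obtain ⟨v₀, hv₀⟩ := exists_ne (0 : W)
  -- choose α ∉ {0, 1}
  obtain ⟨α, -, hα⟩ : ∃ x ∈ Finset.univ, x ∉ ({0, 1} : Finset F) := by
    apply Finset.not_subset.mp
    intro h
    have h1 := Finset.card_le_card h
    have h2 : ({0, 1} : Finset F).card ≤ 2 :=
      le_trans (Finset.card_insert_le _ _) (by simp)
    rw [Finset.card_univ] at h1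
    omega
  simp only [Finset.mem_insert, Finset.mem_singleton, not_or] at hα
  obtain ⟨hα0, hα1⟩ := hα
  have h1α : (1 : F) - α ≠ 0 := sub_ne_zero.mpr (Ne.symm hα1)
  have hαi1 : (1 : F) - α⁻¹ ≠ 0 := by
    rw [sub_ne_zero]
    exact fun h => hα1 (by rw [← inv_inv α, ← h, inv_one])
  have hαi0 : (α : F)⁻¹ ≠ 0 := inv_ne_zero hα0
  have hΔmem : ∀ v : W × W, v ∈ LinearMap.range ((LinearMap.id : W →ₗ[F] W).prod (LinearMap.id : W →ₗ[F] W)) ↔ v.1 = v.2 := by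
    intro v
    constructor
    · rintro ⟨y, rfl⟩; rfl
    · intro h; exact ⟨v.1, Prod.ext rfl h⟩
  have hTtmem : ∀ v : W × W, v ∈ Submodule.prod (⊤ : Submodule F W) (⊥ : Submodule F W) ↔ v.2 = 0 := by
    intro v; simp [Submodule.mem_prod]
  have hBtmem : ∀ v : W × W, v ∈ Submodule.prod (⊥ : Submodule F W) (⊤ : Submodule F W) ↔ v.1 = 0 := by
    intro v; simp [Submodule.mem_prod]
  -- the S i are nonzero
  have hSne : ∀ i, ∃ x ∈ S i, x ≠ 0 := by
    intro i
    rw [← Submodule.ne_bot_iff]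
    intro h
    have := hdim i
    rw [h, finrank_bot] at this
    omega
  -- distinctness
  have d1 : ∀ i, (S i).prod (S i) ≠ Submodule.prod (⊤ : Submodule F W) (⊥ : Submodule F W) := by
    intro i h
    obtain ⟨x, hx, hx0⟩ := hSne i
    have : (x, x) ∈ Submodule.prod (⊤ : Submodule F W) (⊥ : Submodule F W) := h ▸ Submodule.mem_prod.mpr ⟨hx, hx⟩
    exact hx0 ((hTtmem _).mp this)
  have d2 : ∀ i, (S i).prod (S i) ≠ Submodule.prod (⊥ : Submodule F W) (⊤ : Submodule F W) := by
    intro i h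
    obtain ⟨x, hx, hx0⟩ := hSne i
    have : (x, x) ∈ Submodule.prod (⊥ : Submodule F W) (⊤ : Submodule F W) := h ▸ Submodule.mem_prod.mpr ⟨hx, hx⟩
    exact hx0 ((hBtmem _).mp this)
  have d3 : ∀ i, (S i).prod (S i) ≠ LinearMap.range ((LinearMap.id : W →ₗ[F] W).prod (LinearMap.id : W →ₗ[F] W)) := by
    intro i h
    obtain ⟨x, hx, hx0⟩ := hSne i
    have : (x, 0) ∈ LinearMap.range ((LinearMap.id : W →ₗ[F] W).prod (LinearMap.id : W →ₗ[F] W)) := h ▸ Submodule.mem_prod.mpr ⟨hx, Submodule.zero_mem _⟩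
    exact hx0 ((hΔmem _).mp this)
  have d4 : Submodule.prod (⊤ : Submodule F W) (⊥ : Submodule F W) ≠ Submodule.prod (⊥ : Submodule F W) (⊤ : Submodule F W) := by
    intro h
    have : (v₀, 0) ∈ Submodule.prod (⊥ : Submodule F W) (⊤ : Submodule F W) := h ▸ (hTtmem (v₀, 0)).mpr rfl
    exact hv₀ ((hBtmem _).mp this)
  have d5 : Submodule.prod (⊤ : Submodule F W) (⊥ : Submodule F W) ≠ LinearMap.range ((LinearMap.id : W →ₗ[F] W).prod (LinearMap.id : W →ₗ[F] W)) := by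
    intro h
    have : (v₀, 0) ∈ LinearMap.range ((LinearMap.id : W →ₗ[F] W).prod (LinearMap.id : W →ₗ[F] W)) := h ▸ (hTtmem (v₀, 0)).mpr rfl
    exact hv₀ ((hΔmem _).mp this)
  have d6 : Submodule.prod (⊥ : Submodule F W) (⊤ : Submodule F W) ≠ LinearMap.range ((LinearMap.id : W →ₗ[F] W).prod (LinearMap.id : W →ₗ[F] W)) := by
    intro h
    have : (0, v₀) ∈ LinearMap.range ((LinearMap.id : W →ₗ[F] W).prod (LinearMap.id : W →ₗ[F] W)) := h ▸ (hBtmem (0, v₀)).mpr rfl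
    exact hv₀ (((hΔmem _).mp this).symm)
  -- the witnesses for the three special subspaces
  have eAkey := auxTL (W := W) α (1 - α) h1α
  refine ⟨⟨?_, ?_⟩, ?_⟩
  · -- dimensions
    rintro T (⟨i, rfl⟩ | hT)
    · rw [auxFinrankProd, hdim]; omega
    · simp only [Set.mem_insert_iff, Set.mem_singleton_iff] at hT
      rcases hT with rfl | rfl | rfl
      · rw [auxFinrankProd, finrank_top, finrank_bot, Module.finrank_fin_fun]; omega
      · rw [auxFinrankProd, finrank_top, finrank_bot, Module.finrank_fin_fun]; omega
      · rw [LinearMap.finrank_range_of_inj, Module.finrank_fin_fun]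
        intro x y h
        simpa using congrArg Prod.fst h
  · -- witnesses
    rintro T (⟨i, rfl⟩ | hT)
    · -- T = S i × S i
      refine ⟨(g i).prodCongr (g i), ?_, ?_⟩
      · rw [LinearEquiv.coe_prodCongr, auxMapProdMap, Submodule.prod_inf_prod, (hwit i).1,
          Submodule.prod_bot]
      · rintro T (⟨j, rfl⟩ | hT') hne
        · have hji : j ≠ i := fun h => hne (by rw [h])
          rw [LinearEquiv.coe_prodCongr, auxMapProdMap, (hwit i).2 j hji]
        · simp only [Set.mem_insert_iff, Set.mem_singleton_iff] at hT'
          rcases hT' with rfl | rfl | rfl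
          · rw [LinearEquiv.coe_prodCongr, auxMapProdMap, Submodule.map_top,
              Submodule.map_bot, LinearEquiv.range]
          · rw [LinearEquiv.coe_prodCongr, auxMapProdMap, Submodule.map_top,
              Submodule.map_bot, LinearEquiv.range]
          · apply auxMapEqSelf
            · intro v hv
              rw [hΔmem] at hv ⊢
              simp [hv]
            · intro v hv
              rw [hΔmem] at hv ⊢
              rw [LinearEquiv.prodCongr_symm]
              simp [hv]
    · simp only [Set.mem_insert_iff, Set.mem_singleton_iff] at hT
      rcases hT with rfl | rfl | rfl
      · -- T = ⊤ × ⊥, witness (x,y) ↦ (x, α x + (1-α) y)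
        refine ⟨auxTL α (1 - α) h1α, ?_, ?_⟩
        · rw [Submodule.eq_bot_iff]
          rintro v ⟨⟨w, hw, rfl⟩, h2⟩
          simp only [SetLike.mem_coe] at hw h2
          rw [hTtmem] at hw h2
          simp only [LinearEquiv.coe_coe, auxTL_apply, hw, smul_zero, add_zero] at h2 ⊢
          rcases smul_eq_zero.mp h2 with h | h
          · exact absurd h hα0
          · simp [h, hw, Prod.ext_iff]
        · rintro T (⟨j, rfl⟩ | hT') hne
          · apply auxMapEqSelf
            · rintro v ⟨hv1, hv2⟩
              exact ⟨hv1, Submodule.add_mem _ (Submodule.smul_mem _ _ hv1)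
                (Submodule.smul_mem _ _ hv2)⟩
            · rintro v ⟨hv1, hv2⟩
              exact ⟨hv1, Submodule.smul_mem _ _ (Submodule.sub_mem _ hv2
                (Submodule.smul_mem _ _ hv1))⟩
          · simp only [Set.mem_insert_iff, Set.mem_singleton_iff] at hT'
            rcases hT' with rfl | rfl | rfl
            · exact absurd rfl hne
            · apply auxMapEqSelf
              · intro v hv
                rw [hBtmem] at hv ⊢
                simp [hv]
              · intro v hv
                rw [hBtmem] at hv ⊢
                simp [hv]
            · apply auxMapEqSelf
              · intro v hv
                rw [hΔmem] at hv ⊢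
                simp only [auxTL_apply, ← hv]
                rw [← add_smul]
                ring_nf
                simp
              · intro v hv
                rw [hΔmem] at hv ⊢
                simp only [auxTL_symm_apply, ← hv]
                rw [show v.1 - α • v.1 = (1 - α) • v.1 by rw [sub_smul, one_smul], smul_smul,
                  inv_mul_cancel₀ h1α, one_smul]
      · -- T = ⊥ × ⊤, witness (x,y) ↦ (α⁻¹ y + (1-α⁻¹) x, y)
        refine ⟨auxTR α⁻¹ (1 - α⁻¹) hαi1, ?_, ?_⟩
        · rw [Submodule.eq_bot_iff]
          rintro v ⟨⟨w, hw, rfl⟩, h2⟩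
          simp only [SetLike.mem_coe] at hw h2
          rw [hBtmem] at hw h2
          simp only [LinearEquiv.coe_coe, auxTR_apply, hw, smul_zero, add_zero] at h2 ⊢
          rcases smul_eq_zero.mp h2 with h | h
          · exact absurd h hαi0
          · simp [h, hw, Prod.ext_iff]
        · rintro T (⟨j, rfl⟩ | hT') hne
          · apply auxMapEqSelf
            · rintro v ⟨hv1, hv2⟩
              exact ⟨Submodule.add_mem _ (Submodule.smul_mem _ _ hv2)
                (Submodule.smul_mem _ _ hv1), hv2⟩
            · rintro v ⟨hv1, hv2⟩
              exact ⟨Submodule.smul_mem _ _ (Submodule.sub_mem _ hv1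
                (Submodule.smul_mem _ _ hv2)), hv2⟩
          · simp only [Set.mem_insert_iff, Set.mem_singleton_iff] at hT'
            rcases hT' with rfl | rfl | rfl
            · apply auxMapEqSelf
              · intro v hv
                rw [hTtmem] at hv ⊢
                simp [hv]
              · intro v hv
                rw [hTtmem] at hv ⊢
                simp [hv]
            · exact absurd rfl hne
            · apply auxMapEqSelf
              · intro v hv
                rw [hΔmem] at hv ⊢
                simp only [auxTR_apply, hv]
                rw [← add_smul]
                ring_nf
                simp
              · intro v hv
                rw [hΔmem] at hv ⊢
                simp only [auxTR_symm_apply, hv]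
                rw [show v.2 - α⁻¹ • v.2 = (1 - α⁻¹) • v.2 by rw [sub_smul, one_smul], smul_smul,
                  inv_mul_cancel₀ hαi1, one_smul]
      · -- T = Δ, witness (x,y) ↦ (x, α y)
        refine ⟨auxTL 0 α hα0, ?_, ?_⟩
        · rw [Submodule.eq_bot_iff]
          rintro v ⟨⟨w, hw, rfl⟩, h2⟩
          simp only [SetLike.mem_coe] at hw h2
          rw [hΔmem] at hw h2
          simp only [LinearEquiv.coe_coe, auxTL_apply, zero_smul, zero_add] at h2 ⊢
          have hw2 : w.2 = 0 := by
            have h0 : (1 - α) • w.2 = 0 := by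
              rw [sub_smul, one_smul, ← h2, hw, sub_self]
            rcases smul_eq_zero.mp h0 with h | h
            · exact absurd h h1α
            · exact h
          simp [Prod.ext_iff, hw2, hw.trans hw2]
        · rintro T (⟨j, rfl⟩ | hT') hne
          · apply auxMapEqSelf
            · rintro v ⟨hv1, hv2⟩
              exact ⟨hv1, Submodule.add_mem _ (Submodule.smul_mem _ _ hv1)
                (Submodule.smul_mem _ _ hv2)⟩
            · rintro v ⟨hv1, hv2⟩
              exact ⟨hv1, Submodule.smul_mem _ _ (Submodule.sub_mem _ hv2
                (Submodule.smul_mem _ _ hv1))⟩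
          · simp only [Set.mem_insert_iff, Set.mem_singleton_iff] at hT'
            rcases hT' with rfl | rfl | rfl
            · apply auxMapEqSelf
              · intro v hv
                rw [hTtmem] at hv ⊢
                simp [hv]
              · intro v hv
                rw [hTtmem] at hv ⊢
                simp [hv]
            · apply auxMapEqSelf
              · intro v hv
                rw [hBtmem] at hv ⊢
                simp [hv]
              · intro v hv
                rw [hBtmem] at hv ⊢
                simp [hv]
            · exact absurd rfl hne
  · -- cardinality
    have hfinj : Function.Injective (fun i => (S i).prod (S i)) := by
      intro i j h
      have h' : (S i).prod (S i) = (S j).prod (S j) := h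
      apply hinj
      ext x
      constructor
      · intro hx
        have h2 : (x, (0 : W)) ∈ (S i).prod (S i) :=
          Submodule.mem_prod.mpr ⟨hx, Submodule.zero_mem _⟩
        rw [h'] at h2
        exact (Submodule.mem_prod.mp h2).1
      · intro hx
        have h2 : (x, (0 : W)) ∈ (S j).prod (S j) :=
          Submodule.mem_prod.mpr ⟨hx, Submodule.zero_mem _⟩
        rw [← h'] at h2
        exact (Submodule.mem_prod.mp h2).1
    have hdisj : Disjoint (Set.range fun i => (S i).prod (S i))
        ({Submodule.prod (⊤ : Submodule F W) (⊥ : Submodule F W),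
          Submodule.prod (⊥ : Submodule F W) (⊤ : Submodule F W),
          LinearMap.range ((LinearMap.id : W →ₗ[F] W).prod (LinearMap.id : W →ₗ[F] W))} :
          Set (Submodule F (W × W))) := by
      rw [Set.disjoint_left]
      rintro T ⟨i, rfl⟩ hT
      simp only [Set.mem_insert_iff, Set.mem_singleton_iff] at hT
      rcases hT with h | h | h
      exacts [d1 i h, d2 i h, d3 i h]
    show ((Set.range fun i => (S i).prod (S i)) ∪
        {Submodule.prod (⊤ : Submodule F W) (⊥ : Submodule F W),
         Submodule.prod (⊥ : Submodule F W) (⊤ : Submodule F W),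
         LinearMap.range ((LinearMap.id : W →ₗ[F] W).prod (LinearMap.id : W →ₗ[F] W))}).ncard
        = k + 3
    rw [Set.ncard_union_eq hdisj (Set.finite_range _) (Set.toFinite _)]
    have h1 : (Set.range fun i => (S i).prod (S i)).ncard = k := by
      rw [← Set.image_univ, Set.ncard_image_of_injective _ hfinj, Set.ncard_univ,
        Nat.card_eq_fintype_card, Fintype.card_fin]
    have h2 : ({Submodule.prod (⊤ : Submodule F W) (⊥ : Submodule F W),
          Submodule.prod (⊥ : Submodule F W) (⊤ : Submodule F W),
          LinearMap.range ((LinearMap.id : W →ₗ[F] W).prod (LinearMap.id : W →ₗ[F] W))} :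
          Set (Submodule F (W × W))).ncard = 3 := by
      rw [Set.ncard_insert_of_notMem (by simp [d4, d5]),
        Set.ncard_insert_of_notMem (by simp [d6]), Set.ncard_singleton]
    rw [h1, h2]
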